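/- Let H be a heart of a triangulated category D and let E be a nonzero object of D. Then the HN-filtration of E with respect to H is unique up to isomorphism: if E admits two towers of exact triangles with factors A_i ∈ H[k_i] (k_1 > ⋯ > k_m, all A_i nonzero) and B_j ∈ H[l_j] (l_1 > ⋯ > l_p, all B_j nonzero), then m = p, k_i = l_i for all i, and A_i ≅ B_i for all i. Consequently the homology H_k(E) with respect to H, defined as A_i if k = k_i and 0 otherwise, is well defined up to isomorphism. -/

import Mathlib

open CategoryTheory CategoryTheory.Limits CategoryTheory.Pretriangulated

universe v u

variable {C : Type u} [Category.{v} C] [HasZeroObject C] [HasShift C ℤ] [Preadditive C]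
  [∀ n : ℤ, (CategoryTheory.shiftFunctor C n).Additive] [Pretriangulated C]

/-- The shift `S[k]` of a class of objects, closed under isomorphism. -/
def shiftSet (S : Set C) (k : ℤ) : Set C :=
  {X | ∃ A ∈ S, Nonempty (X ≅ A⟦k⟧)}

/-- An HN-filtration of an object `E` with respect to a class of objects `H`:
a tower of exact triangles `E_{i-1} → E_i → A_i → E_{i-1}[1]` with `E_0 = 0`,
`E_m = E` and `A_i ∈ H[k_i]` for a strictly decreasing sequence of integers `k_i`. -/
structure HNFiltration (H : Set C) (E : C) where
  m : ℕ
  deg : Fin m → ℤ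
  deg_strictAnti : ∀ i j : Fin m, i < j → deg j < deg i
  obj : Fin (m + 1) → C
  isZero_zero : IsZero (obj 0)
  obj_last : obj (Fin.last m) = E
  factor : Fin m → C
  factor_mem : ∀ i, factor i ∈ shiftSet H (deg i)
  ι : ∀ i : Fin m, obj i.castSucc ⟶ obj i.succ
  π : ∀ i : Fin m, obj i.succ ⟶ factor i
  δ : ∀ i : Fin m, factor i ⟶ (obj i.castSucc)⟦(1 : ℤ)⟧
  distinguished : ∀ i, Triangle.mk (ι i) (π i) (δ i) ∈ distTriang C

/-- A heart of a triangulated category: a full (isomorphism-closed) additive subcategory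
`H` such that (1) `Hom(H[k₁], H[k₂]) = 0` for `k₁ > k₂`, and (2) every nonzero object
admits an HN-filtration with respect to `H`. -/
structure IsHeart (H : Set C) : Prop where
  isoClosed : ∀ ⦃X Y : C⦄, (X ≅ Y) → X ∈ H → Y ∈ H
  hom_orth : ∀ (k₁ k₂ : ℤ), k₂ < k₁ → ∀ (A₁ A₂ : C),
    A₁ ∈ shiftSet H k₁ → A₂ ∈ shiftSet H k₂ → ∀ φ : A₁ ⟶ A₂, φ = 0
  filt : ∀ E : C, ¬ IsZero E → Nonempty (HNFiltration H E)

lemma shiftSet_shift {S : Set C} {k : ℤ} {X : C} (hX : X ∈ shiftSet S k) (n : ℤ) :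
    X⟦n⟧ ∈ shiftSet S (k + n) := by
  obtain ⟨A, hA, ⟨f⟩⟩ := hX
  exact ⟨A, hA, ⟨(shiftFunctor C n).mapIso f ≪≫ ((shiftFunctorAdd C k n).app A).symm⟩⟩

/-- Key vanishing: maps out of a shifted filtration stage into an object of a
strictly smaller degree vanish. -/
lemma vanish_from {H : Set C} (hH : IsHeart H) {E : C} (F : HNFiltration H E)
    {A : C} {k : ℤ} (hA : A ∈ shiftSet H k) (n : ℤ) (j : Fin (F.m + 1)) :
    ∀ (_ : ∀ i : Fin F.m, (i : ℕ) < (j : ℕ) → k < F.deg i + n)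
      (f : (F.obj j)⟦n⟧ ⟶ A), f = 0 := by
  induction j using Fin.induction with
  | zero =>
    intro _ f
    exact ((shiftFunctor C n).map_isZero F.isZero_zero).eq_zero_of_src f
  | succ i ih =>
    intro hj f
    have hT := Triangle.shift_distinguished _ (F.distinguished i) n
    set T' := (CategoryTheory.shiftFunctor (Triangle C) n).obj
      (Triangle.mk (F.ι i) (F.π i) (F.δ i)) with hT'def
    have h1 : T'.mor₁ ≫ f = 0 := by
      refine ih (fun i' hi' => hj i' ?_) (T'.mor₁ ≫ f)
      simp only [Fin.coe_castSucc, Fin.val_succ] at hi' ⊢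
      omega
    obtain ⟨g, hg⟩ := Triangle.yoneda_exact₂ T' hT f h1
    have hg0 : g = 0 :=
      hH.hom_orth (F.deg i + n) k (hj i (by simp)) _ _
        (shiftSet_shift (F.factor_mem i) n) hA g
    rw [hg, hg0, comp_zero]
    rfl

set_option linter.unusedSectionVars false

lemma vanish_from₀ {H : Set C} (hH : IsHeart H) {E : C} (F : HNFiltration H E)
    {A : C} {k : ℤ} (hA : A ∈ shiftSet H k) (j : Fin (F.m + 1))
    (hj : ∀ i : Fin F.m, (i : ℕ) < (j : ℕ) → k < F.deg i)
    (f : F.obj j ⟶ A) : f = 0 := by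
  have h0 := vanish_from hH F hA 0 j (fun i hi => by have := hj i hi; omega)
    ((shiftFunctorZero C ℤ).hom.app (F.obj j) ≫ f)
  calc f = (shiftFunctorZero C ℤ).inv.app (F.obj j) ≫
      ((shiftFunctorZero C ℤ).hom.app (F.obj j) ≫ f) := by simp
    _ = 0 := by rw [h0, comp_zero]

lemma factor_isZero {H : Set C} (hH : IsHeart H) {E : C} (F : HNFiltration H E)
    (i : Fin F.m) (h : F.π i = 0) : IsZero (F.factor i) := by
  obtain ⟨g, hg⟩ := Triangle.yoneda_exact₃ _ (F.distinguished i) (𝟙 (F.factor i))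
    (by exact (Category.comp_id _).trans h)
  have hg0 : g = 0 := by
    refine vanish_from hH F (F.factor_mem i) 1 i.castSucc (fun i' hi' => ?_) g
    have : i' < i := by rwa [Fin.lt_def, ← Fin.coe_castSucc i]
    have := F.deg_strictAnti i' i this
    omega
  rw [hg0, comp_zero] at hg
  exact (IsZero.iff_id_eq_zero _).2 hg

lemma nonzero_of_filt {H : Set C} (hH : IsHeart H) {E : C} (F : HNFiltration H E)
    (hm : F.m ≠ 0) (hf : ∀ i, ¬ IsZero (F.factor i)) : ¬ IsZero E := by
  intro hE
  obtain ⟨n, hn⟩ := Nat.exists_eq_succ_of_ne_zero hm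
  have hi : n < F.m := by omega
  have hsucc : (⟨n, hi⟩ : Fin F.m).succ = Fin.last F.m := by
    ext; simp [hn]
  have hz : IsZero (F.obj (⟨n, hi⟩ : Fin F.m).succ) := by
    rw [hsucc, F.obj_last]; exact hE
  exact hf _ (factor_isZero hH F ⟨n, hi⟩ (hz.eq_zero_of_src _))

/-- Truncation of an HN-filtration: drops the last step. -/
def HNFiltration.trunc {H : Set C} {E : C} (F : HNFiltration H E) {n : ℕ}
    (hm : F.m = n + 1) :
    HNFiltration H (F.obj (Fin.cast (by omega) (Fin.last n).castSucc)) where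
  m := n
  deg i := F.deg (Fin.cast (by omega : n + 1 = F.m) i.castSucc)
  deg_strictAnti i j h := F.deg_strictAnti _ _
    (by simp only [Fin.lt_def, Fin.coe_cast, Fin.coe_castSucc]; exact h)
  obj j := F.obj (Fin.cast (by omega : n + 1 + 1 = F.m + 1) j.castSucc)
  isZero_zero := by
    have h0 : (Fin.cast (by omega : n + 1 + 1 = F.m + 1) ((0 : Fin (n + 1)).castSucc))
        = (0 : Fin (F.m + 1)) := by ext; simp
    show IsZero (F.obj _)
    rw [h0]; exact F.isZero_zero
  obj_last := rfl
  factor i := F.factor (Fin.cast (by omega : n + 1 = F.m) i.castSucc)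
  factor_mem i := F.factor_mem _
  ι i := F.ι (Fin.cast (by omega : n + 1 = F.m) i.castSucc)
  π i := F.π (Fin.cast (by omega : n + 1 = F.m) i.castSucc)
  δ i := F.δ (Fin.cast (by omega : n + 1 = F.m) i.castSucc)
  distinguished i := F.distinguished _

theorem aux_uniqueness {H : Set C} (hH : IsHeart H) :
    ∀ (n : ℕ) {E₁ E₂ : C} (e : E₁ ≅ E₂) (F₁ : HNFiltration H E₁) (F₂ : HNFiltration H E₂),
      F₁.m = n → (∀ i, ¬ IsZero (F₁.factor i)) → (∀ i, ¬ IsZero (F₂.factor i)) →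
      ∃ hm : F₁.m = F₂.m, ∀ i : Fin F₁.m,
        F₁.deg i = F₂.deg (Fin.cast hm i) ∧
        Nonempty (F₁.factor i ≅ F₂.factor (Fin.cast hm i)) := by
  intro n
  induction n with
  | zero =>
    intro E₁ E₂ e F₁ F₂ hm₁ h1 h2
    have hE₁ : IsZero E₁ := by
      rw [← F₁.obj_last, show Fin.last F₁.m = (0 : Fin (F₁.m + 1)) by ext; simp [hm₁]]
      exact F₁.isZero_zero
    have hE₂ : IsZero E₂ := hE₁.of_iso e.symm
    have hm₂ : F₂.m = 0 := by
      by_contra h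
      exact nonzero_of_filt hH F₂ h h2 hE₂
    exact ⟨hm₁.trans hm₂.symm, fun i => absurd i.isLt (by omega)⟩
  | succ n ih =>
    intro E₁ E₂ e F₁ F₂ hm₁ h1 h2
    have hE₁ : ¬ IsZero E₁ := nonzero_of_filt hH F₁ (by omega) h1
    have hE₂ : ¬ IsZero E₂ := fun h => hE₁ (h.of_iso e)
    have hm₂' : F₂.m ≠ 0 := by
      intro h
      apply hE₂
      rw [← F₂.obj_last, show Fin.last F₂.m = (0 : Fin (F₂.m + 1)) by ext; simp [h]]
      exact F₂.isZero_zero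
    obtain ⟨p, hm₂⟩ := Nat.exists_eq_succ_of_ne_zero hm₂'
    have han : n < F₁.m := by omega
    have hbp : p < F₂.m := by omega
    set a : Fin F₁.m := ⟨n, han⟩ with ha
    set b : Fin F₂.m := ⟨p, hbp⟩ with hb
    have hX₁ : F₁.obj a.succ = E₁ := by
      rw [show a.succ = Fin.last F₁.m by ext; simp [ha, hm₁], F₁.obj_last]
    have hX₂ : F₂.obj b.succ = E₂ := by
      rw [show b.succ = Fin.last F₂.m by ext; simp [hb, hm₂], F₂.obj_last]
    have u : F₁.obj a.succ ≅ F₂.obj b.succ := eqToIso hX₁ ≪≫ e ≪≫ eqToIso hX₂.symm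
    have hπ₁ : F₁.π a ≠ 0 := fun h => h1 a (factor_isZero hH F₁ a h)
    have hπ₂ : F₂.π b ≠ 0 := fun h => h2 b (factor_isZero hH F₂ b h)
    -- minimality of the last degrees
    have hmin₁ : ∀ i : Fin F₁.m, F₁.deg a ≤ F₁.deg i := by
      intro i
      rcases Nat.lt_or_ge (i : ℕ) n with h | h
      · exact le_of_lt (F₁.deg_strictAnti i a (by rw [Fin.lt_def]; exact h))
      · have hia : i = a := Fin.ext (by show (i : ℕ) = n; have := i.isLt; omega)
        rw [hia]
    have hmin₂ : ∀ i : Fin F₂.m, F₂.deg b ≤ F₂.deg i := by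
      intro i
      rcases Nat.lt_or_ge (i : ℕ) p with h | h
      · exact le_of_lt (F₂.deg_strictAnti i b (by rw [Fin.lt_def]; exact h))
      · have hib : i = b := Fin.ext (by show (i : ℕ) = p; have := i.isLt; omega)
        rw [hib]
    -- equality of the last degrees
    have hkl : F₁.deg a = F₂.deg b := by
      by_contra hne
      rcases lt_or_gt_of_ne hne with h | h
      · have h0 : u.inv ≫ F₁.π a = 0 := by
          refine vanish_from₀ hH F₂ (F₁.factor_mem a) b.succ (fun i _ => ?_) _
          exact lt_of_lt_of_le h (hmin₂ i)
        apply hπ₁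
        calc F₁.π a = u.hom ≫ (u.inv ≫ F₁.π a) := by simp
          _ = 0 := by rw [h0, comp_zero]
      · have h0 : u.hom ≫ F₂.π b = 0 := by
          refine vanish_from₀ hH F₁ (F₂.factor_mem b) a.succ (fun i _ => ?_) _
          exact lt_of_lt_of_le h (hmin₁ i)
        apply hπ₂
        calc F₂.π b = u.inv ≫ (u.hom ≫ F₂.π b) := by simp
          _ = 0 := by rw [h0, comp_zero]
    -- factorizations
    have hcomp₁ : F₂.ι b ≫ (u.inv ≫ F₁.π a) = 0 := by
      rw [← Category.assoc]
      refine vanish_from₀ hH F₂ (F₁.factor_mem a) b.castSucc (fun i hi => ?_) _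
      rw [hkl]
      refine F₂.deg_strictAnti i b ?_
      rwa [Fin.lt_def, ← Fin.coe_castSucc b]
    have hgex : ∃ g : F₂.factor b ⟶ F₁.factor a, u.inv ≫ F₁.π a = F₂.π b ≫ g :=
      Triangle.yoneda_exact₂ _ (F₂.distinguished b) (u.inv ≫ F₁.π a) hcomp₁
    obtain ⟨g, hg⟩ := hgex
    have hcomp₂ : F₁.ι a ≫ (u.hom ≫ F₂.π b) = 0 := by
      rw [← Category.assoc]
      refine vanish_from₀ hH F₁ (F₂.factor_mem b) a.castSucc (fun i hi => ?_) _
      rw [← hkl]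
      refine F₁.deg_strictAnti i a ?_
      rwa [Fin.lt_def, ← Fin.coe_castSucc a]
    have hgex' : ∃ g' : F₁.factor a ⟶ F₂.factor b, u.hom ≫ F₂.π b = F₁.π a ≫ g' :=
      Triangle.yoneda_exact₂ _ (F₁.distinguished a) (u.hom ≫ F₂.π b) hcomp₂
    obtain ⟨g', hg'⟩ := hgex'
    -- g' ≫ g = 𝟙
    have key₁ : F₁.π a ≫ g' ≫ g = F₁.π a := by
      rw [← Category.assoc, ← hg', Category.assoc, ← hg, Iso.hom_inv_id_assoc]
    have key₂ : F₂.π b ≫ g ≫ g' = F₂.π b := by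
      rw [← Category.assoc, ← hg, Category.assoc, ← hg', Iso.inv_hom_id_assoc]
    have hgg : g' ≫ g = 𝟙 (F₁.factor a) := by
      have hzex : ∃ z : (F₁.obj a.castSucc)⟦(1 : ℤ)⟧ ⟶ F₁.factor a,
          g' ≫ g - 𝟙 (F₁.factor a) = F₁.δ a ≫ z :=
        Triangle.yoneda_exact₃ _ (F₁.distinguished a) (g' ≫ g - 𝟙 (F₁.factor a))
          (by show F₁.π a ≫ _ = 0
              rw [Preadditive.comp_sub, key₁, Category.comp_id, sub_self])
      obtain ⟨z, hz⟩ := hzex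
      have hz0 : z = 0 := by
        refine vanish_from hH F₁ (F₁.factor_mem a) 1 a.castSucc (fun i hi => ?_) z
        have := hmin₁ i; omega
      rw [hz0, comp_zero] at hz
      exact sub_eq_zero.mp hz
    have hgg' : g ≫ g' = 𝟙 (F₂.factor b) := by
      have hzex : ∃ z : (F₂.obj b.castSucc)⟦(1 : ℤ)⟧ ⟶ F₂.factor b,
          g ≫ g' - 𝟙 (F₂.factor b) = F₂.δ b ≫ z :=
        Triangle.yoneda_exact₃ _ (F₂.distinguished b) (g ≫ g' - 𝟙 (F₂.factor b))
          (by show F₂.π b ≫ _ = 0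
              rw [Preadditive.comp_sub, key₂, Category.comp_id, sub_self])
      obtain ⟨z, hz⟩ := hzex
      have hz0 : z = 0 := by
        refine vanish_from hH F₂ (F₂.factor_mem b) 1 b.castSucc (fun i hi => ?_) z
        have := hmin₂ i; omega
      rw [hz0, comp_zero] at hz
      exact sub_eq_zero.mp hz
    have hiso : F₁.factor a ≅ F₂.factor b := ⟨g', g, hgg, hgg'⟩
    have hg'iso : IsIso g' := ⟨g, hgg, hgg'⟩
    -- morphism of rotated triangles, giving an isomorphism of the truncated pieces
    have hcomm : (Triangle.mk (F₁.ι a) (F₁.π a) (F₁.δ a)).rotate.mor₁ ≫ g' =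
        u.hom ≫ (Triangle.mk (F₂.ι b) (F₂.π b) (F₂.δ b)).rotate.mor₁ := by
      exact hg'.symm
    obtain ⟨c, hc₁, hc₂⟩ := complete_distinguished_triangle_morphism
      (Triangle.mk (F₁.ι a) (F₁.π a) (F₁.δ a)).rotate
      (Triangle.mk (F₂.ι b) (F₂.π b) (F₂.δ b)).rotate
      (rot_of_distTriang _ (F₁.distinguished a)) (rot_of_distTriang _ (F₂.distinguished b))
      u.hom g' hcomm
    have hc : IsIso c := by
      let φ : (Triangle.mk (F₁.ι a) (F₁.π a) (F₁.δ a)).rotate ⟶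
          (Triangle.mk (F₂.ι b) (F₂.π b) (F₂.δ b)).rotate :=
        { hom₁ := u.hom
          hom₂ := g'
          hom₃ := c
          comm₁ := hcomm
          comm₂ := hc₁
          comm₃ := hc₂ }
      have : IsIso φ.hom₃ := isIso₃_of_isIso₁₂ φ
        (rot_of_distTriang _ (F₁.distinguished a)) (rot_of_distTriang _ (F₂.distinguished b))
        (show IsIso u.hom by infer_instance) hg'iso
      exact this
    have e' : F₁.obj a.castSucc ≅ F₂.obj b.castSucc :=
      (shiftFunctor C (1 : ℤ)).preimageIso (@asIso _ _ _ _ c hc)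
    -- apply induction hypothesis to the truncations
    obtain ⟨hmp, hist⟩ := ih e' (F₁.trunc hm₁) (F₂.trunc hm₂) rfl
      (fun i => h1 _) (fun i => h2 _)
    have hnp : n = p := hmp
    have hmm : F₁.m = F₂.m := by omega
    refine ⟨hmm, fun i => ?_⟩
    rcases Nat.lt_or_ge (i : ℕ) n with hi | hi
    · obtain ⟨hd, ⟨hf⟩⟩ := hist ⟨(i : ℕ), hi⟩
      have e₁ : (Fin.cast (by omega : n + 1 = F₁.m)
          (Fin.castSucc ⟨(i : ℕ), hi⟩)) = i := by ext; simp
      have e₂ : (Fin.cast (by omega : p + 1 = F₂.m)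
          (Fin.castSucc (Fin.cast hmp ⟨(i : ℕ), hi⟩))) = Fin.cast hmm i := by ext; simp; rfl
      constructor
      · have t₀ : (F₁.trunc hm₁).deg ⟨(i : ℕ), hi⟩ = F₁.deg i := by
          show F₁.deg _ = F₁.deg i
          exact congrArg F₁.deg e₁
        rw [← t₀, hd]
        show F₂.deg _ = _
        exact congrArg F₂.deg e₂
      · refine ⟨?_⟩
        have t₁ : (F₁.trunc hm₁).factor ⟨(i : ℕ), hi⟩ = F₁.factor i := by
          show F₁.factor _ = F₁.factor i
          exact congrArg F₁.factor e₁
        have t₂ : (F₂.trunc hm₂).factor (Fin.cast hmp ⟨(i : ℕ), hi⟩)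
            = F₂.factor (Fin.cast hmm i) := by
          show F₂.factor _ = F₂.factor _
          exact congrArg F₂.factor e₂
        rw [← t₁, ← t₂]
        exact hf
    · have hia : i = a := Fin.ext (by show (i : ℕ) = n; have := i.isLt; omega)
      have hib : Fin.cast hmm i = b := Fin.ext
        (by show (i : ℕ) = p; have := i.isLt; omega)
      constructor
      · rw [hib, hia]; exact hkl
      · rw [hib, hia]; exact ⟨hiso⟩

/-- the HN-filtration of a nonzero object with respect to a heart is unique
up to isomorphism: two HN-filtrations with nonzero factors have the same length, the same
degrees, and isomorphic factors. -/
theorem statement_3 (H : Set C) (hH : IsHeart H) (E : C) (hE : ¬ IsZero E)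
    (F₁ F₂ : HNFiltration H E)
    (h₁ : ∀ i, ¬ IsZero (F₁.factor i)) (h₂ : ∀ i, ¬ IsZero (F₂.factor i)) :
    ∃ hm : F₁.m = F₂.m, ∀ i : Fin F₁.m,
      F₁.deg i = F₂.deg (Fin.cast hm i) ∧
      Nonempty (F₁.factor i ≅ F₂.factor (Fin.cast hm i)) :=
  aux_uniqueness hH F₁.m (Iso.refl E) F₁ F₂ rfl h₁ h₂
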